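/- arXiv:2007.07955 — 4 statements merged into one kernel-verified Lean document; each statement's English description precedes it below -/
import Mathlib

section
/- Let X be a metric space, d a selfadjoint metric on the double of X whose class is a projection, and set A_n = {x ∈ X : d(x,x') ≤ n} for n ∈ ℕ. Then {A_n} is an expanding sequence, i.e., the (1/2)-neighborhood N_{1/2}(A_n) is contained in A_{n+1} for every n with A_n nonempty. -/
/-- If `d` is a selfadjoint metric on the double of `X` whose class
is a projection, then the sets `A_n = {x : d(x,x') ≤ n}` form an expanding
sequence: `N_{1/2}(A_n) ⊆ A_{n+1}` whenever `A_n` is nonempty.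
Here `d : X → X → ℝ` is the cross-distance `d(x,y')`. -/
theorem stmt2 {X : Type*} [MetricSpace X] (d : X → X → ℝ)
    (hpos : ∀ x y, 0 < d x y)
    (hsym : ∀ x y, d x y = d y x)
    (htri : ∀ x y z, d x z ≤ dist x y + d y z)
    (dX' : X → ℝ) (hdX' : ∀ x, IsGLB {r : ℝ | ∃ y : X, r = d x y} (dX' x))
    (hproj : ∃ α : ℝ, 0 ≤ α ∧ ∃ β : ℝ, 1 ≤ β ∧
      ∀ x : X, -α + (1 / β) * d x x ≤ dX' x) :
    ∀ n : ℕ, {y : X | d y y ≤ (n : ℝ)}.Nonempty →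
      ∀ x : X, Metric.infDist x {y : X | d y y ≤ (n : ℝ)} ≤ 1 / 2 →
        x ∈ {y : X | d y y ≤ (n : ℝ) + 1} := by
  intro n hne x hx
  show d x x ≤ (n : ℝ) + 1
  refine le_of_forall_pos_le_add ?_
  intro ε hε
  have hlt : Metric.infDist x {y : X | d y y ≤ (n : ℝ)} < 1 / 2 + ε / 2 :=
    lt_of_le_of_lt hx (by linarith)
  obtain ⟨y, hy, hxy⟩ := (Metric.infDist_lt_iff hne).mp hlt
  have h1 : d x x ≤ dist x y + d y x := htri x y x
  have h2 : d y x ≤ dist x y + d y y := by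
    rw [hsym y x]
    exact htri x y y
  have hy' : d y y ≤ (n : ℝ) := hy
  linarith
end

section
/- Let X be a metric space and 𝒜 = {A_n}, 𝒟 = {D_n} expanding sequences with associated metrics d_𝒜, d_𝒟 on the double of X. If the composition class [d_𝒜 d_𝒟]_c is the zero element of M^c(X), then the set A_n ∩ D_n is bounded for every n ∈ ℕ. -/
open Filter

lemma delta_le_aux {X : Type*} [MetricSpace X] (A : ℕ → Set X) (hA0 : A 0 = ∅)
    (δA : X → ℝ) (hδA : ∀ n : ℕ, ∀ u ∈ A (n + 1) \ A n, δA u = (n : ℝ) + 1)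
    {x : X} {n : ℕ} (hx : x ∈ A n) : δA x ≤ n := by
  classical
  have hex : ∃ k, x ∈ A k := ⟨n, hx⟩
  have hmn : Nat.find hex ≤ n := Nat.find_le hx
  have hspec : x ∈ A (Nat.find hex) := Nat.find_spec hex
  have hm0 : Nat.find hex ≠ 0 := by
    intro h
    rw [h, hA0] at hspec
    exact hspec
  obtain ⟨k, hk⟩ := Nat.exists_eq_succ_of_ne_zero hm0
  have hnot : x ∉ A k := Nat.find_min hex (hk ▸ Nat.lt_succ_self k)
  rw [hk] at hspec hmn
  have := hδA k x ⟨hspec, hnot⟩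
  rw [this]
  exact_mod_cast hmn

/-- Let `𝒜 = {A_n}`, `𝒟 = {D_n}` be expanding sequences (with
convention `A_0 = D_0 = ∅`), `d_𝒜`, `d_𝒟` the associated metrics on the double,
and `comp = d_𝒜 ∘ d_𝒟` their composition. If `[comp]_c` is the zero element of
`M^c(X)`, i.e. `comp` is coarsely equivalent to `d_{x₀}(x,y') =
d_X(x,x₀)+1+d_X(x₀,y)` for some `x₀`, then `A_n ∩ D_n` is bounded for all `n`. -/
theorem stmt11 {X : Type*} [MetricSpace X] (A D : ℕ → Set X)
    (hA0 : A 0 = ∅) (hD0 : D 0 = ∅)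
    (hAne : ∃ n, (A n).Nonempty) (hDne : ∃ n, (D n).Nonempty)
    (hAexp : ∀ n, (A n).Nonempty →
      ∀ x : X, Metric.infDist x (A n) ≤ 1 / 2 → x ∈ A (n + 1))
    (hDexp : ∀ n, (D n).Nonempty →
      ∀ x : X, Metric.infDist x (D n) ≤ 1 / 2 → x ∈ D (n + 1))
    (hAunion : ⋃ n, A n = Set.univ) (hDunion : ⋃ n, D n = Set.univ)
    (δA δD : X → ℝ)
    (hδA : ∀ n : ℕ, ∀ u ∈ A (n + 1) \ A n, δA u = (n : ℝ) + 1)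
    (hδD : ∀ n : ℕ, ∀ u ∈ D (n + 1) \ D n, δD u = (n : ℝ) + 1)
    (dA dD : X → X → ℝ)
    (hdA : ∀ x y, IsGLB {r : ℝ | ∃ u : X, r = dist x u + δA u + dist u y} (dA x y))
    (hdD : ∀ x y, IsGLB {r : ℝ | ∃ u : X, r = dist x u + δD u + dist u y} (dD x y))
    (comp : X → X → ℝ)
    (hcomp : ∀ x z, IsGLB {r : ℝ | ∃ y : X, r = dA x y + dD y z} (comp x z))
    (hzero : ∃ x₀ : X, ∃ φ ψ : ℝ → ℝ,
      Monotone φ ∧ Tendsto φ atTop atTop ∧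
      Monotone ψ ∧ Tendsto ψ atTop atTop ∧
      ∀ x y : X, φ (dist x x₀ + 1 + dist x₀ y) ≤ comp x y ∧
        comp x y ≤ ψ (dist x x₀ + 1 + dist x₀ y)) :
    ∀ n : ℕ, Bornology.IsBounded (A n ∩ D n) := by
  intro n
  obtain ⟨x₀, φ, ψ, hφm, hφt, _, _, hbd⟩ := hzero
  obtain ⟨R, hR⟩ := (hφt.eventually_gt_atTop (2 * n : ℝ)).exists_forall_of_atTop
  apply Metric.isBounded_closedBall (x := x₀) (r := R) |>.subset
  intro x hx
  have hδAx : δA x ≤ n := delta_le_aux A hA0 δA hδA hx.1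
  have hδDx : δD x ≤ n := delta_le_aux D hD0 δD hδD hx.2
  have hdAx : dA x x ≤ δA x := by
    have := (hdA x x).1 ⟨x, rfl⟩
    simpa using this
  have hdDx : dD x x ≤ δD x := by
    have := (hdD x x).1 ⟨x, rfl⟩
    simpa using this
  have hcx : comp x x ≤ 2 * n := by
    have := (hcomp x x).1 ⟨x, rfl⟩
    linarith
  have hφle : φ (dist x x₀ + 1 + dist x₀ x) ≤ comp x x := (hbd x x).1
  simp only [Metric.mem_closedBall]
  by_contra hcon
  push_neg at hcon
  have hge : R ≤ dist x x₀ + 1 + dist x₀ x := by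
    have : (0:ℝ) ≤ dist x₀ x := dist_nonneg
    linarith
  have := hR _ hge
  linarith
end

section
/- Let X be a metric space, 𝒜 = {A_n} an expanding sequence, and B ⊆ X a nonempty subset. Define d_{ℰ_B}(x,y') = d_X(x,B) + 1 + d_X(y,B). If d_{ℰ_B}(x,y') ≥ d_𝒜(x,y') for all x,y ∈ X (i.e., d_{ℰ_B} ⪯ d_𝒜 in the partial order), then there exists n ∈ ℕ such that B ⊆ A_n. -/
/-- If `B ⊆ X` is nonempty and
`d_{ℰ_B}(x,y') = d_X(x,B) + 1 + d_X(y,B)` dominates pointwise from above the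
metric `d_𝒜` of an expanding sequence `𝒜 = {A_n}` (i.e. `d_{ℰ_B} ⪯ d_𝒜`),
then `B ⊆ A_n` for some `n`. -/
theorem stmt12 {X : Type*} [MetricSpace X] (A : ℕ → Set X) (hA0 : A 0 = ∅)
    (hne : ∃ n, (A n).Nonempty)
    (hexp : ∀ n, (A n).Nonempty →
      ∀ x : X, Metric.infDist x (A n) ≤ 1 / 2 → x ∈ A (n + 1))
    (hunion : ⋃ n, A n = Set.univ)
    (δ : X → ℝ) (hδ : ∀ n : ℕ, ∀ u ∈ A (n + 1) \ A n, δ u = (n : ℝ) + 1)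
    (dA : X → X → ℝ)
    (hdA : ∀ x y, IsGLB {r : ℝ | ∃ u : X, r = dist x u + δ u + dist u y} (dA x y))
    (B : Set X) (hB : B.Nonempty)
    (hord : ∀ x y : X, dA x y ≤ Metric.infDist x B + 1 + Metric.infDist y B) :
    ∃ n : ℕ, B ⊆ A n := by
  refine ⟨2, fun b hb => ?_⟩
  -- d_A(b,b) ≤ 1
  have h1 : dA b b ≤ 1 := by
    have := hord b b
    have hbB : Metric.infDist b B = 0 := Metric.infDist_zero_of_mem hb
    linarith
  have hlt : dA b b < 3 / 2 := by linarith
  obtain ⟨r, ⟨u, hu⟩, _, hr⟩ := (hdA b b).exists_between hlt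
  -- find the level of u
  have humem : ∃ n, u ∈ A n := by
    have : u ∈ ⋃ n, A n := by rw [hunion]; trivial
    exact Set.mem_iUnion.mp this
  classical
  set k := Nat.find humem with hk
  have hkA : u ∈ A k := Nat.find_spec humem
  have hk0 : k ≠ 0 := by
    intro h
    rw [h, hA0] at hkA
    exact hkA
  obtain ⟨m, hm⟩ := Nat.exists_eq_succ_of_ne_zero hk0
  have hnot : u ∉ A m := Nat.find_min humem (by omega)
  have hδu : δ u = (m : ℝ) + 1 := hδ m u ⟨by rwa [hm] at hkA, hnot⟩
  -- δ u < 3/2 and dist b u < 1/4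
  have hdnn : (0:ℝ) ≤ dist b u := dist_nonneg
  have hdnn' : (0:ℝ) ≤ dist u b := dist_nonneg
  have hδlt : (m : ℝ) + 1 < 3 / 2 := by rw [hu, hδu] at hr; linarith
  have hm0 : m = 0 := by
    by_contra h
    have : (1:ℝ) ≤ (m:ℝ) := by exact_mod_cast Nat.one_le_iff_ne_zero.mpr h
    linarith
  have huA1 : u ∈ A 1 := by rw [hm0] at hm; rwa [hm] at hkA
  have hdbu : dist b u ≤ 1 / 2 := by
    rw [hu, hδu, hm0] at hr
    rw [dist_comm u b] at hr
    push_cast at hr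
    linarith
  have : b ∈ A (1 + 1) := by
    apply hexp 1 ⟨u, huA1⟩ b
    exact le_trans (Metric.infDist_le_dist_of_mem huA1) hdbu
  exact this
end

section
/- Let {u_n} and {v_n} be two approximate units of the same closed ideal J ⊆ C_b(X), each satisfying u_n u_{n+1} = u_n (resp. v_n v_{n+1} = v_n). Set A_n = {x : u_n(x)=1} and B_n = {x : v_n(x)=1}. Then for every n there exists m such that A_n ⊆ B_{m+1}, and symmetrically for every n there exists m with B_n ⊆ A_{m+1}. -/
open Filter

lemma stmt15_aux {X : Type*} [MetricSpace X]
    (u : BoundedContinuousFunction X ℂ) (v : ℕ → BoundedContinuousFunction X ℂ)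
    (hav : Filter.Tendsto (fun m => ‖v m * u - u‖ : ℕ → ℝ) atTop (nhds 0))
    (hvmul : ∀ m, v m * v (m + 1) = v m) :
    ∃ m, {x : X | u x = 1} ⊆ {x : X | v (m + 1) x = 1} := by
  have h := (hav.eventually (gt_mem_nhds (show (0:ℝ) < 1 by norm_num))).exists
  obtain ⟨m, hm⟩ := h
  refine ⟨m, fun x hx => ?_⟩
  simp only [Set.mem_setOf_eq] at hx ⊢
  have hb := BoundedContinuousFunction.norm_coe_le_norm (v m * u - u) x
  have hval : (v m * u - u) x = v m x - 1 := by
    simp [hx]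
  rw [hval] at hb
  have hvne : v m x ≠ 0 := by
    intro h0
    rw [h0] at hb
    simp at hb
    linarith [hb.trans_lt hm]
  have := congrArg (fun f => f x) (hvmul m)
  simp only [BoundedContinuousFunction.coe_mul, Pi.mul_apply] at this
  have : v m x * v (m + 1) x = v m x * 1 := by simpa using this
  exact mul_left_cancel₀ hvne this

/-- If `{u_n}` and `{v_n}` are two approximate units of the same
closed ideal `J ⊆ C_b(X)`, each satisfying `u_n u_{n+1} = u_n`
(resp. `v_n v_{n+1} = v_n`), and `A_n = {x : u_n(x) = 1}`,
`B_n = {x : v_n(x) = 1}`, then for every `n` there is `m` with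
`A_n ⊆ B_{m+1}`, and symmetrically. -/
theorem stmt15 {X : Type*} [MetricSpace X]
    (J : Ideal (BoundedContinuousFunction X ℂ))
    (hJclosed : IsClosed (J : Set (BoundedContinuousFunction X ℂ)))
    (u v : ℕ → BoundedContinuousFunction X ℂ)
    (humem : ∀ n, u n ∈ J) (hvmem : ∀ n, v n ∈ J)
    (hau : ∀ f ∈ J, Tendsto (fun n => ‖u n * f - f‖) atTop (nhds 0))
    (hav : ∀ f ∈ J, Tendsto (fun n => ‖v n * f - f‖) atTop (nhds 0))
    (humul : ∀ n, u n * u (n + 1) = u n)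
    (hvmul : ∀ n, v n * v (n + 1) = v n) :
    (∀ n, ∃ m, {x : X | u n x = 1} ⊆ {x : X | v (m + 1) x = 1}) ∧
    (∀ n, ∃ m, {x : X | v n x = 1} ⊆ {x : X | u (m + 1) x = 1}) := by
  exact ⟨fun n => stmt15_aux (u n) v (hav (u n) (humem n)) hvmul,
         fun n => stmt15_aux (v n) u (hau (v n) (hvmem n)) humul⟩
end
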